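/- Let a < b, n ≥ 1, and define wce(n)² = 2·∑_{p=1}^{∞} 1/(1 + (2npπ/(b−a))²). Then wce(n)² = ( (b−a)/(2n) )/tanh( (b−a)/(2n) ) − 1, and wce(n) ~ (b−a)/(2√3 n) as n → ∞ (i.e. n·wce(n) → (b−a)/(2√3)). -/

import Mathlib

open Real Filter


lemma sq_inv_summable : Summable (fun k : ℕ => 1 / ((k : ℝ) + 1) ^ 2) := by
  have := (summable_nat_add_iff (f := fun n : ℕ => 1 / (n : ℝ) ^ 2) 1).mpr
    (Real.summable_one_div_nat_pow.mpr one_lt_two)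
  convert this using 2 with k
  push_cast; rfl
  push_cast; ring

lemma sinh_prod (x : ℝ) (hx : 0 < x) :
    Tendsto (fun n : ℕ => ∏ j ∈ Finset.range n, (1 + x ^ 2 / (Real.pi ^ 2 * ((j : ℝ) + 1) ^ 2)))
      atTop (nhds (Real.sinh x / x)) := by
  have h := Complex.tendsto_euler_sin_prod (x * Complex.I / Real.pi)
  have hπ : (Real.pi : ℂ) ≠ 0 := Complex.ofReal_ne_zero.mpr Real.pi_ne_zero
  have hxI : (x : ℂ) * Complex.I ≠ 0 := by
    simp [Complex.ofReal_ne_zero.mpr hx.ne', Complex.I_ne_zero]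
  have key : ∀ n : ℕ, (Real.pi : ℂ) * ((x : ℂ) * Complex.I / Real.pi) *
      ∏ j ∈ Finset.range n, ((1 : ℂ) - ((x : ℂ) * Complex.I / Real.pi) ^ 2 / ((j : ℂ) + 1) ^ 2)
      = (x : ℂ) * Complex.I *
        ((∏ j ∈ Finset.range n, (1 + x ^ 2 / (Real.pi ^ 2 * ((j : ℝ) + 1) ^ 2)) : ℝ) : ℂ) := by
    intro n
    rw [Complex.ofReal_prod]
    congr 1
    · field_simp
    · refine Finset.prod_congr rfl fun j _ => ?_
      have hj : ((j : ℂ) + 1) ≠ 0 := by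
        have := Nat.cast_add_one_ne_zero (R := ℂ) j
        push_cast at this ⊢
        exact this
      push_cast
      rw [div_pow, mul_pow, Complex.I_sq]
      field_simp
      ring
  rw [show Complex.sin (Real.pi * ((x : ℂ) * Complex.I / Real.pi)) = Complex.sinh x * Complex.I by
    rw [mul_div_assoc', mul_comm, mul_div_assoc, div_self hπ, mul_one, Complex.sin_mul_I]] at h
  have h2 := (h.congr (fun n => key n)).div_const ((x : ℂ) * Complex.I)
  have h3 : Tendsto (fun n : ℕ =>
      ((∏ j ∈ Finset.range n, (1 + x ^ 2 / (Real.pi ^ 2 * ((j : ℝ) + 1) ^ 2)) : ℝ) : ℂ))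
      atTop (nhds ((Real.sinh x / x : ℝ) : ℂ)) := by
    have := h2.congr (fun n => by
      rw [mul_comm ((x:ℂ) * Complex.I), mul_div_assoc, div_self hxI, mul_one])
    rw [show Complex.sinh x * Complex.I / ((x:ℂ) * Complex.I) = ((Real.sinh x / x : ℝ) : ℂ) by
      rw [mul_div_mul_right _ _ Complex.I_ne_zero]; push_cast; ring] at this
    exact this
  exact (Complex.isometry_ofReal.isEmbedding.tendsto_nhds_iff).mpr h3

lemma log_hasSum (x : ℝ) (hx : 0 < x) :
    HasSum (fun k : ℕ => Real.log (1 + x ^ 2 / (Real.pi ^ 2 * ((k : ℝ) + 1) ^ 2)))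
      (Real.log (Real.sinh x / x)) := by
  have hpos : ∀ k : ℕ, (0:ℝ) < 1 + x ^ 2 / (Real.pi ^ 2 * ((k : ℝ) + 1) ^ 2) := by
    intro k
    have : (0:ℝ) ≤ x ^ 2 / (Real.pi ^ 2 * ((k : ℝ) + 1) ^ 2) := by positivity
    linarith
  rw [hasSum_iff_tendsto_nat_of_nonneg (fun k => Real.log_nonneg (by
    have h0 : (0:ℝ) ≤ x ^ 2 / (Real.pi ^ 2 * ((k : ℝ) + 1) ^ 2) := by positivity
    linarith))]
  · have := (sinh_prod x hx)
    have hcont := (Real.continuousAt_log (by positivity : Real.sinh x / x ≠ 0)).tendsto.comp this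
    refine hcont.congr fun n => ?_
    rw [Function.comp_apply, Real.log_prod]
    exact fun j _ => (hpos j).ne'

lemma coth_sum (x : ℝ) (hx : 0 < x) :
    ∑' k : ℕ, 2 * x ^ 2 / (x ^ 2 + Real.pi ^ 2 * ((k : ℝ) + 1) ^ 2)
      = x / Real.tanh x - 1 := by
  set c : ℕ → ℝ := fun k => Real.pi ^ 2 * ((k : ℝ) + 1) ^ 2 with hc_def
  have hc : ∀ k, 0 < c k := fun k => by positivity
  set g : ℕ → ℝ → ℝ := fun k y => Real.log (1 + y ^ 2 / c k) with hg_def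
  have hderiv : ∀ (k : ℕ) (y : ℝ), HasDerivAt (g k) (2 * y / (c k + y ^ 2)) y := by
    intro k y
    have h1 : HasDerivAt (fun y : ℝ => 1 + y ^ 2 / c k) (2 * y / c k) y := by
      simpa using ((hasDerivAt_pow 2 y).div_const (c k)).const_add 1
    have hpos : (0:ℝ) < 1 + y ^ 2 / c k := by
      have : (0:ℝ) ≤ y ^ 2 / c k := by positivity
      linarith
    have := h1.log hpos.ne'
    convert this using 1
    have := (hc k).ne'
    field_simp
  have hu : Summable (fun k => 2 * (x + 1) / c k) := by
    have := sq_inv_summable.mul_left (2 * (x + 1) / Real.pi ^ 2)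
    refine this.congr fun k => ?_
    simp only [hc_def]
    field_simp
  have hB : HasDerivAt (fun z => ∑' k, g k z) (∑' k, 2 * x / (c k + x ^ 2)) x := by
    refine hasDerivAt_tsum_of_isPreconnected hu (isOpen_Ioo (a := -(x+1)) (b := x+1))
      (isPreconnected_Ioo) (fun k y _ => hderiv k y) (fun k y hy => ?_)
      (Set.mem_Ioo.mpr ⟨by linarith, by linarith⟩) (log_hasSum x hx).summable
      (Set.mem_Ioo.mpr ⟨by linarith, by linarith⟩)
    have h1 : |y| ≤ x + 1 := by
      rw [abs_le]; exact ⟨(Set.mem_Ioo.mp hy).1.le, (Set.mem_Ioo.mp hy).2.le⟩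
    have h2 : c k ≤ c k + y ^ 2 := by nlinarith [sq_nonneg y]
    rw [Real.norm_eq_abs, abs_div, abs_of_pos (show (0:ℝ) < c k + y ^ 2 by positivity)]
    calc |2 * y| / (c k + y ^ 2) ≤ (2 * (x + 1)) / (c k) := by
          apply div_le_div₀ (by positivity) ?_ (hc k) h2
          rw [abs_mul]; simpa using by linarith [h1, abs_nonneg y]
      _ = 2 * (x + 1) / c k := rfl
  have hC : (fun z => ∑' k, g k z) =ᶠ[nhds x] (fun y => Real.log (Real.sinh y) - Real.log y) := by
    filter_upwards [isOpen_Ioi.mem_nhds (Set.mem_Ioi.mpr hx)] with y hy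
    rw [(log_hasSum y hy).tsum_eq, Real.log_div (Real.sinh_pos_iff.mpr hy).ne' (ne_of_gt hy)]
  have hD : HasDerivAt (fun y => Real.log (Real.sinh y) - Real.log y)
      (Real.cosh x / Real.sinh x - x⁻¹) x := by
    have h1 := (Real.hasDerivAt_sinh x).log (Real.sinh_pos_iff.mpr hx).ne'
    have h2 := Real.hasDerivAt_log hx.ne'
    exact h1.sub h2
  have hEq : ∑' k, 2 * x / (c k + x ^ 2) = Real.cosh x / Real.sinh x - x⁻¹ :=
    hB.unique (hD.congr_of_eventuallyEq hC)
  have hs := Real.sinh_pos_iff.mpr hx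
  have hch := Real.cosh_pos x
  calc ∑' k, 2 * x ^ 2 / (x ^ 2 + c k)
      = ∑' k, x * (2 * x / (c k + x ^ 2)) := by
        refine tsum_congr fun k => ?_
        field_simp; ring
    _ = x * (∑' k, 2 * x / (c k + x ^ 2)) := by rw [tsum_mul_left]
    _ = x * (Real.cosh x / Real.sinh x - x⁻¹) := by rw [hEq]
    _ = x / Real.tanh x - 1 := by
        rw [Real.tanh_eq_sinh_div_cosh]
        field_simp

lemma basel_succ : ∑' p : ℕ, 1 / ((p : ℝ) + 1) ^ 2 = Real.pi ^ 2 / 6 := by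
  have h := hasSum_zeta_two
  have h2 := h.tsum_eq
  rw [h.summable.tsum_eq_zero_add] at h2
  simp only [Nat.cast_zero, Nat.cast_add, Nat.cast_one] at h2
  rw [← h2]
  norm_num
theorem stmt_9 (a b : ℝ) (hab : a < b) :
    (∀ n : ℕ, 1 ≤ n →
      2 * ∑' p : ℕ, 1 / (1 + (2 * (n : ℝ) * ((p : ℝ) + 1) * Real.pi / (b - a)) ^ 2)
        = ((b - a) / (2 * n)) / Real.tanh ((b - a) / (2 * n)) - 1) ∧
    Filter.Tendsto
      (fun n : ℕ => (n : ℝ) *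
        Real.sqrt (2 * ∑' p : ℕ,
          1 / (1 + (2 * (n : ℝ) * ((p : ℝ) + 1) * Real.pi / (b - a)) ^ 2)))
      Filter.atTop (nhds ((b - a) / (2 * Real.sqrt 3))) := by
  have hd : (0:ℝ) < b - a := sub_pos.mpr hab
  have part1 : ∀ n : ℕ, 1 ≤ n →
      2 * ∑' p : ℕ, 1 / (1 + (2 * (n : ℝ) * ((p : ℝ) + 1) * Real.pi / (b - a)) ^ 2)
        = ((b - a) / (2 * n)) / Real.tanh ((b - a) / (2 * n)) - 1 := by
    intro n hn
    have hn0 : (0:ℝ) < (n : ℝ) := by exact_mod_cast hn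
    set x : ℝ := (b - a) / (2 * n) with hx_def
    have hx : 0 < x := by positivity
    rw [← coth_sum x hx, ← tsum_mul_left]
    refine tsum_congr fun p => ?_
    have hp : (0:ℝ) < (p : ℝ) + 1 := by positivity
    rw [hx_def]
    rw [div_pow, div_pow]
    field_simp
  refine ⟨part1, ?_⟩
  have hS : ∀ n : ℕ, (n:ℝ)^2 * (2 * ∑' p : ℕ,
      1 / (1 + (2 * (n : ℝ) * ((p : ℝ) + 1) * Real.pi / (b - a)) ^ 2))
      = ∑' p : ℕ, (n:ℝ)^2 * (2 * (1 / (1 + (2 * (n : ℝ) * ((p : ℝ) + 1) * Real.pi / (b - a)) ^ 2))) := by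
    intro n
    rw [tsum_mul_left, tsum_mul_left]
  have hbound_sum : Summable (fun p : ℕ => (b-a)^2/(2*Real.pi^2) * (1 / ((p : ℝ) + 1) ^ 2)) :=
    sq_inv_summable.mul_left _
  have hlim : ∀ p : ℕ, Tendsto (fun n : ℕ => (n:ℝ)^2 * (2 * (1 / (1 + (2 * (n : ℝ) * ((p : ℝ) + 1) * Real.pi / (b - a)) ^ 2))))
      atTop (nhds ((b-a)^2/(2*Real.pi^2) * (1 / ((p : ℝ) + 1) ^ 2))) := by
    intro p
    set c : ℝ := 4 * ((p:ℝ)+1)^2 * Real.pi^2 / (b-a)^2 with hc_def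
    have hc : 0 < c := by positivity
    have h0 : Tendsto (fun n : ℕ => ((n:ℝ)⁻¹ * (n:ℝ)⁻¹ + c)⁻¹ * 2) atTop (nhds (c⁻¹ * 2)) := by
      have := ((tendsto_inv_atTop_nhds_zero_nat.mul
        tendsto_inv_atTop_nhds_zero_nat).add_const c)
      simp only [zero_mul, zero_add] at this
      exact (this.inv₀ hc.ne').mul_const 2
    have hceq : c⁻¹ * 2 = (b-a)^2/(2*Real.pi^2) * (1 / ((p : ℝ) + 1) ^ 2) := by
      rw [hc_def]
      have hp : (0:ℝ) < (p:ℝ)+1 := by positivity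
      field_simp
      ring
    rw [← hceq]
    refine Tendsto.congr' ?_ h0
    filter_upwards [eventually_ge_atTop 1] with n hn
    have hn0 : (0:ℝ) < (n:ℝ) := by exact_mod_cast hn
    have hp : (0:ℝ) < (p:ℝ)+1 := by positivity
    rw [hc_def]
    rw [div_pow]
    field_simp
    ring
  have hbound : ∀ᶠ n : ℕ in atTop, ∀ p : ℕ,
      ‖(n:ℝ)^2 * (2 * (1 / (1 + (2 * (n : ℝ) * ((p : ℝ) + 1) * Real.pi / (b - a)) ^ 2)))‖
        ≤ (b-a)^2/(2*Real.pi^2) * (1 / ((p : ℝ) + 1) ^ 2) := by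
    filter_upwards [eventually_ge_atTop 1] with n hn p
    have hn0 : (0:ℝ) < (n:ℝ) := by exact_mod_cast hn
    have hp : (0:ℝ) < (p:ℝ)+1 := by positivity
    have ht : (0:ℝ) < (2 * (n : ℝ) * ((p : ℝ) + 1) * Real.pi / (b - a)) ^ 2 := by positivity
    have hden : (0:ℝ) < 1 + (2 * (n : ℝ) * ((p : ℝ) + 1) * Real.pi / (b - a)) ^ 2 := by linarith
    rw [Real.norm_eq_abs, abs_of_pos (by positivity)]
    have h1 : 1 / (1 + (2 * (n : ℝ) * ((p : ℝ) + 1) * Real.pi / (b - a)) ^ 2)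
        ≤ 1 / ((2 * (n : ℝ) * ((p : ℝ) + 1) * Real.pi / (b - a)) ^ 2) :=
      one_div_le_one_div_of_le ht (by linarith)
    have key := mul_le_mul_of_nonneg_left
      (mul_le_mul_of_nonneg_left h1 (by norm_num : (0:ℝ) ≤ 2)) (sq_nonneg ((n:ℝ)))
    refine key.trans (le_of_eq ?_)
    rw [div_pow]
    field_simp
  have hB := tendsto_tsum_of_dominated_convergence hbound_sum hlim hbound
  rw [tsum_mul_left (a := (b-a)^2/(2*Real.pi^2)), basel_succ] at hB
  have hval : (b-a)^2/(2*Real.pi^2) * (Real.pi^2/6) = (b-a)^2/12 := by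
    field_simp; ring
  rw [hval] at hB
  have hB2 : Tendsto (fun n : ℕ => (n:ℝ)^2 * (2 * ∑' p : ℕ,
      1 / (1 + (2 * (n : ℝ) * ((p : ℝ) + 1) * Real.pi / (b - a)) ^ 2)))
      atTop (nhds ((b-a)^2/12)) := by
    refine Tendsto.congr (fun n => (hS n).symm) ?_
    exact hB
  have hsq := (Real.continuous_sqrt.continuousAt (x := (b-a)^2/12)).tendsto.comp hB2
  have hfinal : Real.sqrt ((b-a)^2/12) = (b - a) / (2 * Real.sqrt 3) := by
    rw [show (b-a)^2/12 = ((b-a)/(2*Real.sqrt 3))^2 by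
      rw [div_pow, mul_pow, Real.sq_sqrt (by norm_num : (3:ℝ) ≥ 0)]
      norm_num]
    exact Real.sqrt_sq (by positivity)
  rw [hfinal] at hsq
  refine Tendsto.congr (fun n => ?_) hsq
  have hSnonneg : 0 ≤ 2 * ∑' p : ℕ, 1 / (1 + (2 * (n : ℝ) * ((p : ℝ) + 1) * Real.pi / (b - a)) ^ 2) := by
    refine mul_nonneg (by norm_num) (tsum_nonneg fun p => ?_)
    positivity
  rw [Function.comp_apply, Real.sqrt_mul (sq_nonneg _), Real.sqrt_sq (Nat.cast_nonneg n)]
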